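/- Let Y₁,…,Y_N (N ≥ 2) be i.i.d. real random variables with a diffuse common law (no atoms). With K(x) = (1/2)sign(x), define Λ^N = (1/N)∑_{i=1}^N | (1/(N-1))∑_{j≠i} K(Y_i - Y_j) - E[K(Y_i - Y)| Y_i] |, where Y is an independent copy of Y₁. Then for all α > 0, P(Λ^N ≥ α) ≤ 2N e^{-2α²(N-1)}. -/

import Mathlib

open MeasureTheory ProbabilityTheory Finset

noncomputable def K (x : ℝ) : ℝ := Real.sign x / 2

open Real
open scoped ENNReal

lemma bernoulli_bound (p : ℝ) (hp0 : 0 ≤ p) (hp1 : p ≤ 1) (s : ℝ) :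
    p * Real.exp (s * (1 - p)) + (1 - p) * Real.exp (-(s * p)) ≤ Real.exp (s ^ 2 / 8) := by
  rcases hp0.eq_or_lt with h0 | hp0'
  · subst h0; simp; positivity
  rcases hp1.eq_or_lt with h1 | hp1'
  · subst h1; simp; positivity
  set q : ℝ := 1 - p with hq
  have hq0 : 0 < q := by simp [hq]; linarith
  set φ : ℝ → ℝ := fun s => p * Real.exp (s * q) + q * Real.exp (-(s * p)) with hφ
  have hφpos : ∀ x, 0 < φ x := fun x => by positivity
  set ψ : ℝ → ℝ := fun s => p * q * Real.exp (s * q) - p * q * Real.exp (-(s * p)) with hψ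
  have hder1 : ∀ x, HasDerivAt φ (ψ x) x := by
    intro x
    have h1 : HasDerivAt (fun x : ℝ => x * q) q x := by
      simpa using (hasDerivAt_id x).mul_const q
    have h2 : HasDerivAt (fun x : ℝ => -(x * p)) (-p) x := by
      have := ((hasDerivAt_id x).mul_const p).neg; simp only [id, one_mul] at this; exact this
    have := ((h1.exp.const_mul p).add (h2.exp.const_mul q))
    exact this.congr_deriv (by simp [hψ]; ring)
  -- derivative of ψ
  set ψ' : ℝ → ℝ := fun s => p * q * (q * Real.exp (s * q)) + p * q * (p * Real.exp (-(s * p))) with hψ'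
  have hder2 : ∀ x, HasDerivAt ψ (ψ' x) x := by
    intro x
    have h1 : HasDerivAt (fun x : ℝ => x * q) q x := by
      simpa using (hasDerivAt_id x).mul_const q
    have h2 : HasDerivAt (fun x : ℝ => -(x * p)) (-p) x := by
      have := ((hasDerivAt_id x).mul_const p).neg; simp only [id, one_mul] at this; exact this
    have := ((h1.exp.const_mul (p*q)).sub (h2.exp.const_mul (p*q)))
    exact this.congr_deriv (by simp [hψ']; ring)
  set F : ℝ → ℝ := fun s => s ^ 2 / 8 - Real.log (φ s) with hF
  set D : ℝ → ℝ := fun s => s / 4 - ψ s / φ s with hD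
  have hderF : ∀ x, HasDerivAt F (D x) x := by
    intro x
    have h1 : HasDerivAt (fun s : ℝ => s ^ 2 / 8) (x / 4) x := by
      have := (hasDerivAt_pow 2 x).div_const 8
      exact this.congr_deriv (by norm_num; ring)
    have h2 : HasDerivAt (fun s : ℝ => Real.log (φ s)) (ψ x / φ x) x :=
      (hder1 x).log (hφpos x).ne'
    exact h1.sub h2
  have hderD : ∀ x, HasDerivAt D (1 / 4 - (ψ' x * φ x - ψ x * ψ x) / (φ x) ^ 2) x := by
    intro x
    have h1 : HasDerivAt (fun s : ℝ => s / 4) (1 / 4) x := by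
      simpa using (hasDerivAt_id x).div_const 4
    exact h1.sub ((hder2 x).div (hder1 x) (hφpos x).ne')
  have hD'nonneg : ∀ x, 0 ≤ 1 / 4 - (ψ' x * φ x - ψ x * ψ x) / (φ x) ^ 2 := by
    intro x
    set A := Real.exp (x * q) with hA
    set B := Real.exp (-(x * p)) with hB
    have hA0 : 0 < A := Real.exp_pos _
    have hB0 : 0 < B := Real.exp_pos _
    have key : ψ' x * φ x - ψ x * ψ x = (p * A) * (q * B) := by
      simp only [hψ', hψ, hφ, hq]; ring
    rw [key]
    rw [sub_nonneg, div_le_iff₀ (by positivity)]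
    have hφx : φ x = p * A + q * B := rfl
    nlinarith [sq_nonneg (p * A - q * B), hφx]
  have hDmono : Monotone D := by
    apply monotone_of_deriv_nonneg
    · exact fun x => (hderD x).differentiableAt
    · intro x; rw [(hderD x).deriv]; exact hD'nonneg x
  have hD0 : D 0 = 0 := by simp [hD, hψ]
  have hF0 : F 0 = 0 := by
    simp [hF, hφ, hq]
  -- F is monotone on [0, ∞) and antitone on (-∞, 0]
  have hFx : ∀ x, 0 ≤ F x := by
    intro x
    rcases le_total 0 x with hx | hx
    · have hmono : MonotoneOn F (Set.Ici 0) := by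
        apply monotoneOn_of_deriv_nonneg (convex_Ici 0)
          (Continuous.continuousOn (by
            exact continuous_iff_continuousAt.2 fun y => (hderF y).continuousAt))
        · intro y _; exact (hderF y).differentiableAt.differentiableWithinAt
        · intro y hy
          rw [(hderF y).deriv]
          rw [interior_Ici] at hy
          calc (0:ℝ) = D 0 := hD0.symm
          _ ≤ D y := hDmono (le_of_lt hy)
      calc (0:ℝ) = F 0 := hF0.symm
      _ ≤ F x := hmono (by simp) (by simpa using hx) hx
    · have hanti : AntitoneOn F (Set.Iic 0) := by
        apply antitoneOn_of_deriv_nonpos (convex_Iic 0)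
          (Continuous.continuousOn (by
            exact continuous_iff_continuousAt.2 fun y => (hderF y).continuousAt))
        · intro y _; exact (hderF y).differentiableAt.differentiableWithinAt
        · intro y hy
          rw [(hderF y).deriv]
          rw [interior_Iic] at hy
          calc D y ≤ D 0 := hDmono (le_of_lt hy)
          _ = 0 := hD0
      calc (0:ℝ) = F 0 := hF0.symm
      _ ≤ F x := hanti (by simpa using hx) (by simp) hx
  have := hFx s
  have hlog : Real.log (φ s) ≤ s ^ 2 / 8 := by simp only [hF] at this; linarith
  calc φ s = Real.exp (Real.log (φ s)) := (Real.exp_log (hφpos s)).symm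
  _ ≤ Real.exp (s ^ 2 / 8) := Real.exp_le_exp.2 hlog

lemma measurable_K : Measurable K := by
  have : Measurable Real.sign := by
    unfold Real.sign
    exact (measurable_const.ite (measurableSet_lt measurable_id measurable_const)
      (measurable_const.ite (measurableSet_lt measurable_const measurable_id) measurable_const))
  exact this.div_const 2

lemma K_zero : K 0 = 0 := by simp [K]

lemma K_of_pos {x : ℝ} (hx : 0 < x) : K x = 1 / 2 := by
  simp [K, Real.sign_of_pos hx]

lemma K_of_neg {x : ℝ} (hx : x < 0) : K x = -(1 / 2) := by
  simp [K, Real.sign_of_neg hx]; ring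

lemma abs_K_le (x : ℝ) : |K x| ≤ 1 / 2 := by
  rcases lt_trichotomy x 0 with h | h | h
  · rw [K_of_neg h]; rw [abs_neg, abs_of_nonneg]; norm_num
  · simp [h, K_zero]
  · rw [K_of_pos h]; rw [abs_of_nonneg]; norm_num

section StepIntegral

variable (ρ : Measure ℝ) [IsProbabilityMeasure ρ] [NullSingletonClass ρ]

lemma ioi_toReal (a : ℝ) :
    (ρ (Set.Ioi a)).toReal = 1 - (ρ (Set.Iio a)).toReal := by
  have h1 : ρ (Set.Iic a) = ρ (Set.Iio a) := (measure_congr (Iio_ae_eq_Iic (μ := ρ) (a := a))).symm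
  have h2 : ρ (Set.Ioi a) = 1 - ρ (Set.Iic a) := by
    rw [← Set.compl_Iic, measure_compl measurableSet_Iic (measure_ne_top _ _), measure_univ]
  rw [h2, h1, ENNReal.toReal_sub_of_le (h1 ▸ prob_le_one) (by simp)]
  simp

lemma iio_toReal_mem (a : ℝ) :
    0 ≤ (ρ (Set.Iio a)).toReal ∧ (ρ (Set.Iio a)).toReal ≤ 1 := by
  constructor
  · exact ENNReal.toReal_nonneg
  · rw [show (1:ℝ) = (1 : ℝ≥0∞).toReal by simp]
    exact ENNReal.toReal_mono (by simp) (prob_le_one)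

lemma step_integral (a A B : ℝ) (f : ℝ → ℝ)
    (hA : ∀ u, u < a → f u = A) (hB : ∀ u, a < u → f u = B) :
    ∫ u, f u ∂ρ = A * (ρ (Set.Iio a)).toReal + B * (1 - (ρ (Set.Iio a)).toReal) := by
  have hae : f =ᵐ[ρ] (Set.indicator (Set.Iio a) (fun _ => A)
      + Set.indicator (Set.Ioi a) (fun _ => B)) := by
    have hnull : ρ {a} = 0 := measure_singleton a
    refine (MeasureTheory.ae_iff (p := fun u => f u = _)).2 (measure_mono_null ?_ hnull)
    intro u hu
    simp only [Set.mem_setOf_eq] at hu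
    simp only [Set.mem_singleton_iff]
    by_contra hua
    rcases lt_trichotomy u a with h | h | h
    · exact hu (by simp [hA u h, Set.indicator_of_mem (Set.mem_Iio.2 h),
        Set.indicator_of_notMem (by simp [Set.mem_Ioi]; linarith : u ∉ Set.Ioi a)])
    · exact hua h
    · exact hu (by simp [hB u h, Set.indicator_of_notMem (by simp [Set.mem_Iio]; linarith : u ∉ Set.Iio a),
        Set.indicator_of_mem (Set.mem_Ioi.2 h)])
  rw [integral_congr_ae hae]
  simp only [Pi.add_apply]
  rw [integral_add ((integrable_const A).indicator measurableSet_Iio)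
    ((integrable_const B).indicator measurableSet_Ioi)]
  rw [integral_indicator_const _ measurableSet_Iio, integral_indicator_const _ measurableSet_Ioi]
  simp only [measureReal_def]
  rw [ioi_toReal]
  simp [mul_comm]

end StepIntegral

section PiProd

variable (ρ : Measure ℝ) [IsProbabilityMeasure ρ]

lemma integral_pi_prod : ∀ (n : ℕ) (f : ℝ → ℝ),
    ∫ z : Fin n → ℝ, ∏ j, f (z j) ∂(Measure.pi fun _ : Fin n => ρ) = (∫ u, f u ∂ρ) ^ n := by
  intro n
  induction n with
  | zero => intro f; simp
  | succ n ih =>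
    intro f
    have MP := measurePreserving_piFinSuccAbove (fun _ : Fin (n + 1) => ρ) 0
    have h1 : ∫ w : ℝ × (Fin n → ℝ), (f w.1 * ∏ j, f (w.2 j))
          ∂(ρ.prod (Measure.pi fun _ : Fin n => ρ))
        = (∫ u, f u ∂ρ) * (∫ u, f u ∂ρ) ^ n := by
      rw [integral_prod_mul (f := f) (g := fun y : Fin n → ℝ => ∏ j, f (y j)), ih]
    rw [← MP.integral_comp' (fun w => f w.1 * ∏ j, f (w.2 j))] at h1
    rw [pow_succ']
    rw [← h1]
    congr 1
    ext z
    rw [Fin.prod_univ_succAbove (fun j => f (z j)) 0]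
    simp [MeasurableEquiv.piFinSuccAbove, Fin.tail]

end PiProd

section Tail

variable (ρ : Measure ℝ) [IsProbabilityMeasure ρ]

lemma tail_bound (n : ℕ) (α : ℝ) (hα : 0 < α) (f : ℝ → ℝ) (hf : Measurable f)
    (hbd : ∀ u, |f u| ≤ 1)
    (hmgf : ∀ s : ℝ, ∫ u, Real.exp (s * f u) ∂ρ ≤ Real.exp (s ^ 2 / 8)) :
    (Measure.pi fun _ : Fin n => ρ) {z | (n : ℝ) * α ≤ |∑ j, f (z j)|}
      ≤ ENNReal.ofReal (2 * Real.exp (-2 * α ^ 2 * n)) := by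
  set PP : Measure (Fin n → ℝ) := Measure.pi fun _ : Fin n => ρ with hPP
  set V : (Fin n → ℝ) → ℝ := fun z => ∑ j, f (z j) with hV
  have hVmeas : Measurable V := Finset.measurable_sum _ (fun j _ => hf.comp (measurable_pi_apply j))
  have hVbd : ∀ z, |V z| ≤ n := by
    intro z
    calc |V z| ≤ ∑ j, |f (z j)| := Finset.abs_sum_le_sum_abs _ _
    _ ≤ ∑ _j : Fin n, (1:ℝ) := Finset.sum_le_sum fun j _ => hbd (z j)
    _ = n := by simp
  have hint : ∀ t : ℝ, Integrable (fun z => Real.exp (t * V z)) PP := by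
    intro t
    apply Integrable.mono' (integrable_const (Real.exp (|t| * n)))
    · exact ((hVmeas.const_mul t).exp).aestronglyMeasurable
    · refine Filter.Eventually.of_forall fun z => ?_
      rw [Real.norm_eq_abs, abs_of_pos (Real.exp_pos _), Real.exp_le_exp]
      calc t * V z ≤ |t * V z| := le_abs_self _
      _ = |t| * |V z| := abs_mul _ _
      _ ≤ |t| * n := by
          exact mul_le_mul_of_nonneg_left (hVbd z) (abs_nonneg t)
  have hmgfV : ∀ t : ℝ, mgf V PP t ≤ Real.exp ((n : ℝ) * (t ^ 2 / 8)) := by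
    intro t
    have h1 : mgf V PP t = (∫ u, Real.exp (t * f u) ∂ρ) ^ n := by
      rw [mgf]
      rw [show (fun z => Real.exp (t * V z)) = fun z => ∏ j, Real.exp (t * f (z j)) by
        ext z; rw [← Real.exp_sum, hV, Finset.mul_sum]]
      exact integral_pi_prod ρ n (fun u => Real.exp (t * f u))
    rw [h1, Real.exp_nat_mul, ]
    apply pow_le_pow_left₀ (integral_nonneg fun u => (Real.exp_pos _).le) (hmgf t)
  have key : ∀ (S : Set (Fin n → ℝ)), (PP S).toReal ≤ Real.exp (-2 * α ^ 2 * n) → PP S ≤ ENNReal.ofReal (Real.exp (-2 * α ^ 2 * n)) := by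
    intro S hS
    exact (ENNReal.le_ofReal_iff_toReal_le (measure_ne_top _ _) (Real.exp_pos _).le).2 hS
  have hcomb : ∀ t : ℝ, Real.exp (-t * ((n:ℝ) * α)) * Real.exp ((n : ℝ) * (t ^ 2 / 8))
      = Real.exp (-t * n * α + n * t ^ 2 / 8) := by
    intro t; rw [← Real.exp_add]; ring_nf
  have up : PP {z | (n : ℝ) * α ≤ V z} ≤ ENNReal.ofReal (Real.exp (-2 * α ^ 2 * n)) := by
    apply key
    calc (PP {z | (n : ℝ) * α ≤ V z}).toReal
        ≤ Real.exp (-(4 * α) * ((n:ℝ) * α)) * mgf V PP (4 * α) :=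
          measure_ge_le_exp_mul_mgf _ (by positivity) (hint _)
      _ ≤ Real.exp (-(4 * α) * ((n:ℝ) * α)) * Real.exp ((n : ℝ) * ((4 * α) ^ 2 / 8)) := by
          exact mul_le_mul_of_nonneg_left (hmgfV _) (Real.exp_pos _).le
      _ = Real.exp (-2 * α ^ 2 * n) := by rw [← Real.exp_add]; ring_nf
  have low : PP {z | V z ≤ -((n : ℝ) * α)} ≤ ENNReal.ofReal (Real.exp (-2 * α ^ 2 * n)) := by
    apply key
    calc (PP {z | V z ≤ -((n : ℝ) * α)}).toReal
        ≤ Real.exp (-(-(4 * α)) * (-((n:ℝ) * α))) * mgf V PP (-(4 * α)) :=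
          measure_le_le_exp_mul_mgf _ (by linarith) (hint _)
      _ ≤ Real.exp (-(-(4 * α)) * (-((n:ℝ) * α))) * Real.exp ((n : ℝ) * ((-(4 * α)) ^ 2 / 8)) := by
          exact mul_le_mul_of_nonneg_left (hmgfV _) (Real.exp_pos _).le
      _ = Real.exp (-2 * α ^ 2 * n) := by rw [← Real.exp_add]; ring_nf
  have hsub : {z | (n : ℝ) * α ≤ |V z|} ⊆ {z | (n : ℝ) * α ≤ V z} ∪ {z | V z ≤ -((n : ℝ) * α)} := by
    intro z hz
    simp only [Set.mem_setOf_eq] at hz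
    rcases le_abs.1 hz with h | h
    · exact Or.inl h
    · exact Or.inr (show V z ≤ -((n:ℝ) * α) by linarith)
  calc PP {z | (n : ℝ) * α ≤ |V z|} ≤ PP ({z | (n : ℝ) * α ≤ V z} ∪ {z | V z ≤ -((n : ℝ) * α)}) :=
        measure_mono hsub
    _ ≤ PP {z | (n : ℝ) * α ≤ V z} + PP {z | V z ≤ -((n : ℝ) * α)} := measure_union_le _ _
    _ ≤ ENNReal.ofReal (Real.exp (-2 * α ^ 2 * n)) + ENNReal.ofReal (Real.exp (-2 * α ^ 2 * n)) :=
        add_le_add up low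
    _ = ENNReal.ofReal (2 * Real.exp (-2 * α ^ 2 * n)) := by
        rw [← ENNReal.ofReal_add (Real.exp_pos _).le (Real.exp_pos _).le]; ring_nf

end Tail

section Slice

variable (ρ : Measure ℝ) [IsProbabilityMeasure ρ] [NullSingletonClass ρ]

lemma gfun_eq (a : ℝ) : ∫ y, K (a - y) ∂ρ = (ρ (Set.Iio a)).toReal - 1 / 2 := by
  rw [step_integral ρ a (1/2) (-(1/2)) _ (fun u hu => K_of_pos (by linarith))
    (fun u hu => K_of_neg (by linarith))]
  ring

lemma single_mgf (a s : ℝ) :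
    ∫ u, Real.exp (s * (K (a - u) - ((ρ (Set.Iio a)).toReal - 1 / 2))) ∂ρ
      ≤ Real.exp (s ^ 2 / 8) := by
  set p := (ρ (Set.Iio a)).toReal with hp
  have hmem := iio_toReal_mem ρ a
  rw [step_integral ρ a (Real.exp (s * (1 - p))) (Real.exp (-(s * p))) _
    (fun u hu => by rw [K_of_pos (by linarith : (0:ℝ) < a - u)]; congr 1; ring)
    (fun u hu => by rw [K_of_neg (by linarith : a - u < 0)]; congr 1; ring)]
  have := bernoulli_bound p hmem.1 hmem.2 s
  linarith [this]

lemma slice_bound (n : ℕ) (hn : 0 < n) (α : ℝ) (hα : 0 < α) (a : ℝ) :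
    (Measure.pi fun _ : Fin n => ρ)
        {z | α ≤ |(1 / (n : ℝ)) * (∑ j, K (a - z j)) - ∫ y, K (a - y) ∂ρ|}
      ≤ ENNReal.ofReal (2 * Real.exp (-2 * α ^ 2 * n)) := by
  set c : ℝ := (ρ (Set.Iio a)).toReal - 1 / 2 with hc
  set f : ℝ → ℝ := fun u => K (a - u) - c with hf
  have hmem := iio_toReal_mem ρ a
  have hnpos : (0:ℝ) < n := by exact_mod_cast hn
  have hset : {z : Fin n → ℝ | α ≤ |(1 / (n : ℝ)) * (∑ j, K (a - z j)) - ∫ y, K (a - y) ∂ρ|}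
      = {z : Fin n → ℝ | (n : ℝ) * α ≤ |∑ j, f (z j)|} := by
    ext z
    simp only [Set.mem_setOf_eq]
    have hsum : ∑ j, f (z j) = (∑ j, K (a - z j)) - (n : ℝ) * c := by
      rw [hf]; rw [Finset.sum_sub_distrib]; simp [mul_comm]
    rw [gfun_eq, ← hc, hsum]
    have h2 : (1 / (n : ℝ)) * (∑ j, K (a - z j)) - c
        = (1 / (n : ℝ)) * ((∑ j, K (a - z j)) - (n : ℝ) * c) := by
      field_simp
    rw [h2, abs_mul, abs_of_pos (by positivity : (0:ℝ) < 1 / (n:ℝ))]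
    rw [one_div, inv_mul_eq_div, le_div_iff₀ hnpos, mul_comm]
  rw [hset]
  apply tail_bound ρ n α hα f
  · exact (measurable_K.comp (measurable_const.sub measurable_id)).sub measurable_const
  · intro u
    have h1 := abs_K_le (a - u)
    have h2 : |c| ≤ 1 / 2 := by
      rw [hc, abs_le]; constructor <;> [linarith [hmem.1]; linarith [hmem.2]]
    calc |f u| ≤ |K (a - u)| + |c| := abs_sub _ _
    _ ≤ 1 := by linarith
  · intro s
    exact single_mgf ρ a s

end Slice

theorem stmt_12 {Ω : Type*} [MeasurableSpace Ω] (μ : Measure Ω) [IsProbabilityMeasure μ]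
    (N : ℕ) (hN : 2 ≤ N)
    (ρ : Measure ℝ) [IsProbabilityMeasure ρ] [NullSingletonClass ρ]
    (Y : Fin N → Ω → ℝ)
    (hmeas : ∀ i, Measurable (Y i))
    (hindep : iIndepFun Y μ)
    (hlaw : ∀ i, Measure.map (Y i) μ = ρ)
    (α : ℝ) (hα : 0 < α) :
    μ {ω | α ≤ (1 / N : ℝ) * ∑ i : Fin N,
        |(1 / (N - 1 : ℝ)) * (∑ j ∈ Finset.univ.erase i, K (Y i ω - Y j ω))
          - ∫ y : ℝ, K (Y i ω - y) ∂ρ|}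
      ≤ ENNReal.ofReal (2 * N * Real.exp (-2 * α ^ 2 * (N - 1 : ℝ))) := by
  obtain ⟨n, rfl⟩ : ∃ n, N = n + 1 := ⟨N - 1, by omega⟩
  have hn : 1 ≤ n := by omega
  have hncast : ((n + 1 : ℕ) : ℝ) - 1 = (n : ℝ) := by push_cast; ring
  set gf : ℝ → ℝ := fun a => ∫ y, K (a - y) ∂ρ with hgf
  have hgfmeas : Measurable gf := by
    have h1 : gf = fun a => (ρ (Set.Iio a)).toReal - 1 / 2 := by
      ext a; exact gfun_eq ρ a
    rw [h1]
    apply Measurable.sub _ measurable_const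
    apply Monotone.measurable
    intro a b hab
    exact ENNReal.toReal_mono (measure_ne_top _ _)
      (measure_mono (Set.Iio_subset_Iio hab))
  -- the functions T i
  set T : Fin (n+1) → Ω → ℝ := fun i ω =>
    (1 / ((n+1 : ℕ) - 1 : ℝ)) * (∑ j ∈ Finset.univ.erase i, K (Y i ω - Y j ω))
      - ∫ y : ℝ, K (Y i ω - y) ∂ρ with hT
  -- union bound subset
  have hsub : {ω | α ≤ (1 / (n+1 : ℕ) : ℝ) * ∑ i : Fin (n+1),
        |(1 / ((n+1 : ℕ) - 1 : ℝ)) * (∑ j ∈ Finset.univ.erase i, K (Y i ω - Y j ω))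
          - ∫ y : ℝ, K (Y i ω - y) ∂ρ|}
      ⊆ ⋃ i ∈ Finset.univ, {ω | α ≤ |T i ω|} := by
    intro ω hω
    simp only [Set.mem_setOf_eq] at hω
    by_contra hc
    simp only [Set.mem_iUnion, Set.mem_setOf_eq, not_exists, not_le] at hc
    have hlt : ∑ i : Fin (n+1), |T i ω| < ∑ _i : Fin (n+1), α :=
      Finset.sum_lt_sum_of_nonempty Finset.univ_nonempty (fun i _ => hc i (Finset.mem_univ i))
    rw [Finset.sum_const, Finset.card_univ, Fintype.card_fin] at hlt
    have hNpos : (0:ℝ) < ((n+1 : ℕ) : ℝ) := by positivity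
    have : (1 / ((n+1:ℕ)) : ℝ) * ∑ i : Fin (n+1), |T i ω| < α := by
      rw [one_div, inv_mul_lt_iff₀ hNpos]
      calc ∑ i : Fin (n+1), |T i ω| < (n+1 : ℕ) • α := hlt
      _ = ((n+1:ℕ):ℝ) * α := by rw [nsmul_eq_mul]
    exact absurd hω (not_le.2 this)
  -- joint law is the product measure
  set V : Ω → (Fin (n+1) → ℝ) := fun ω j => Y j ω with hV
  have hVmeas : Measurable V := measurable_pi_lambda _ fun j => hmeas j
  have hmap : Measure.map V μ = Measure.pi (fun _ : Fin (n+1) => ρ) := by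
    refine (Measure.pi_eq fun s hs => ?_).symm
    rw [Measure.map_apply hVmeas (MeasurableSet.univ_pi hs)]
    have hpre : V ⁻¹' (Set.univ.pi s) = ⋂ i, Y i ⁻¹' s i := by
      ext ω; simp [Set.mem_univ_pi, hV]
    rw [hpre, hindep.meas_iInter (fun i => ⟨s i, hs i, rfl⟩)]
    exact Finset.prod_congr rfl fun i _ => by
      rw [← hlaw i, Measure.map_apply (hmeas i) (hs i)]
  -- per-index bound
  have hper : ∀ i : Fin (n+1), μ {ω | α ≤ |T i ω|}
      ≤ ENNReal.ofReal (2 * Real.exp (-2 * α ^ 2 * n)) := by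
    intro i
    -- the set in the path space
    set S : Set (Fin (n+1) → ℝ) := {y | α ≤ |(1 / ((n+1 : ℕ) - 1 : ℝ)) *
        (∑ j, K (y i - y j)) - ∫ y' : ℝ, K (y i - y') ∂ρ|} with hS
    have hTS : {ω | α ≤ |T i ω|} = V ⁻¹' S := by
      ext ω
      simp only [Set.mem_setOf_eq, Set.mem_preimage, hS, hT, hV]
      rw [Finset.sum_erase _ (by rw [sub_self]; exact K_zero)]
    -- T as a preimage under the succAbove equivalence
    set e := MeasurableEquiv.piFinSuccAbove (fun _ : Fin (n+1) => ℝ) i with he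
    have MP := measurePreserving_piFinSuccAbove (fun _ : Fin (n+1) => ρ) i
    set Tset : Set (ℝ × (Fin n → ℝ)) :=
      {w | α ≤ |(1 / (n : ℝ)) * (∑ j, K (w.1 - w.2 j)) - gf w.1|} with hTset
    have hTsetMeas : MeasurableSet Tset := by
      apply measurableSet_le measurable_const
      apply Measurable.abs
      apply Measurable.sub _ (hgfmeas.comp measurable_fst)
      apply Measurable.const_mul
      apply Finset.measurable_sum
      intro j _
      exact measurable_K.comp (measurable_fst.sub ((measurable_pi_apply j).comp measurable_snd))
    have hSe : S = e ⁻¹' Tset := by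
      ext y
      simp only [hS, hTset, Set.mem_setOf_eq, Set.mem_preimage, he,
        MeasurableEquiv.piFinSuccAbove_apply, Fin.insertNthEquiv_symm_apply, Fin.removeNth, hgf]
      rw [Fin.sum_univ_succAbove (fun j => K (y i - y j)) i, sub_self, K_zero, zero_add, hncast]
    have hcalc : μ {ω | α ≤ |T i ω|}
        = (ρ.prod (Measure.pi fun _ : Fin n => ρ)) Tset := by
      rw [hTS, hSe, ← Set.preimage_comp,
        ← Measure.map_apply (e.measurable.comp hVmeas) hTsetMeas,
        ← Measure.map_map e.measurable hVmeas, hmap]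
      rw [he] at *
      rw [MP.map_eq]
    rw [hcalc, Measure.prod_apply hTsetMeas]
    have hslice : ∀ a : ℝ, (Measure.pi fun _ : Fin n => ρ) (Prod.mk a ⁻¹' Tset)
        ≤ ENNReal.ofReal (2 * Real.exp (-2 * α ^ 2 * n)) := by
      intro a
      have : Prod.mk a ⁻¹' Tset
          = {z : Fin n → ℝ | α ≤ |(1 / (n : ℝ)) * (∑ j, K (a - z j)) - ∫ y, K (a - y) ∂ρ|} := by
        ext z; simp [hTset, hgf]
      rw [this]
      exact slice_bound ρ n (by omega) α hα a
    calc ∫⁻ a, (Measure.pi fun _ : Fin n => ρ) (Prod.mk a ⁻¹' Tset) ∂ρ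
        ≤ ∫⁻ _a, ENNReal.ofReal (2 * Real.exp (-2 * α ^ 2 * n)) ∂ρ :=
          lintegral_mono fun a => hslice a
      _ = ENNReal.ofReal (2 * Real.exp (-2 * α ^ 2 * n)) := by
          rw [lintegral_const, measure_univ, mul_one]
  -- assemble
  calc μ {ω | α ≤ (1 / (n+1 : ℕ) : ℝ) * ∑ i : Fin (n+1),
        |(1 / ((n+1 : ℕ) - 1 : ℝ)) * (∑ j ∈ Finset.univ.erase i, K (Y i ω - Y j ω))
          - ∫ y : ℝ, K (Y i ω - y) ∂ρ|}
      ≤ μ (⋃ i ∈ Finset.univ, {ω | α ≤ |T i ω|}) := measure_mono hsub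
    _ ≤ ∑ i : Fin (n+1), μ {ω | α ≤ |T i ω|} := measure_biUnion_finset_le _ _
    _ ≤ ∑ _i : Fin (n+1), ENNReal.ofReal (2 * Real.exp (-2 * α ^ 2 * n)) :=
        Finset.sum_le_sum fun i _ => hper i
    _ = ENNReal.ofReal (2 * (n+1 : ℕ) * Real.exp (-2 * α ^ 2 * ((n+1 : ℕ) - 1 : ℝ))) := by
        rw [Finset.sum_const, Finset.card_univ, Fintype.card_fin, hncast]
        rw [nsmul_eq_mul, ← ENNReal.ofReal_natCast (n+1),
          ← ENNReal.ofReal_mul (by positivity)]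
        congr 1
        ring
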